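/- Let G be a properly edge-coloured graph on vertex set V, let b, m, r be positive integers with 2*m*r <= b, let P = {P_1, ..., P_r} be a rainbow path forest in G, and let H be a subgraph of G such that no colour appears both on an edge of H and on an edge of P, every vertex of H has degree at least 3b in H, and for any two disjoint vertex sets A, B of size b there are at least b+1 edges of H between A and B. Then either P_1 has at least |V(P)| - 2b vertices (where V(P) is the union of vertex sets of the P_i), or there exist two edges e_1, e_2 of H and a rainbow path forest P' = {P'_1, ..., P'_r} with edge set contained in E(P) ∪ {e_1, e_2} such that P'_1 has at least |V(P_1)| + m vertices. -/

import Mathlib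

def IsProperEdgeColoring {V C : Type*} (G : SimpleGraph V) (c : Sym2 V → C) : Prop :=
  ∀ e ∈ G.edgeSet, ∀ f ∈ G.edgeSet, e ≠ f → (∃ v, v ∈ e ∧ v ∈ f) → c e ≠ c f

/-- A path forest with `r` paths in a graph `G`: a collection of `r` pairwise
vertex-disjoint paths in `G`. -/
structure PathForest {V : Type*} (G : SimpleGraph V) (r : ℕ) where
  first : Fin r → V
  last : Fin r → V
  path : ∀ i, G.Walk (first i) (last i)
  isPath : ∀ i, (path i).IsPath
  disj : ∀ i j, i ≠ j → ∀ v, v ∈ (path i).support → v ∉ (path j).support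

/-- A path forest is rainbow (w.r.t. a colouring `c`) if all edges appearing on
its paths have pairwise distinct colours. -/
def PathForest.IsRainbow {V C : Type*} {G : SimpleGraph V} {r : ℕ}
    (P : PathForest G r) (c : Sym2 V → C) : Prop :=
  ((((List.finRange r).flatMap fun i => (P.path i).edges)).map c).Nodup

/-- Total number of edges of a path forest. -/
def PathForest.edgeCount {V : Type*} {G : SimpleGraph V} {r : ℕ} (P : PathForest G r) : ℕ :=
  ∑ i, (P.path i).length

/-- Total number of vertices covered by a path forest. -/
def PathForest.vertexCount {V : Type*} {G : SimpleGraph V} {r : ℕ} (P : PathForest G r) : ℕ :=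
  ∑ i, (P.path i).support.length

set_option linter.unusedSectionVars false

namespace StmtAux

open SimpleGraph Walk List

variable {V : Type*} [DecidableEq V] {G : SimpleGraph V}

theorem support_length_takeUntil_eq {v w u : V} (p : G.Walk v w) (h : u ∈ p.support) :
    (p.takeUntil u h).support.length = p.support.idxOf u + 1 := by
  induction p with
  | nil =>
    rw [mem_support_nil_iff] at h
    subst u
    simp!
  | cons r p ih =>
    rename_i a b c'
    cases h with
    | head => simp!
    | tail _ hu =>
      simp! only
      split_ifs with h'
      · subst h'
        simp!
      · rw [eq_comm] at h'
        simp! only [support_cons, List.length_cons, List.idxOf_cons_ne _ (Ne.symm h'), ih hu]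

theorem support_take_drop {v w u : V} (p : G.Walk v w) (h : u ∈ p.support) :
    (p.takeUntil u h).support ++ (p.dropUntil u h).support.tail = p.support := by
  conv_rhs => rw [← p.take_spec h]
  rw [support_append]

theorem support_length_dropUntil_eq {v w u : V} (p : G.Walk v w) (h : u ∈ p.support) :
    (p.dropUntil u h).support.length = p.support.length - p.support.idxOf u := by
  have h1 := support_take_drop p h
  have h2 := support_length_takeUntil_eq p h
  have h3 : (p.dropUntil u h).support = u :: (p.dropUntil u h).support.tail :=
    support_eq_cons _
  have h4 : (p.dropUntil u h).support.length = (p.dropUntil u h).support.tail.length + 1 := by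
    rw [h3]; simp
  have h5 : (p.takeUntil u h).support.length + (p.dropUntil u h).support.tail.length
      = p.support.length := by rw [← h1, List.length_append]
  omega

variable {r : ℕ}

def newLast (P : PathForest G r) (z j : Fin r) (l₁ l₂ : V) (i : Fin r) : V :=
  if i = z then l₁ else if i = j then l₂ else P.last i

def newPath (P : PathForest G r) (z j : Fin r) {l₁ l₂ : V}
    (W₁ : G.Walk (P.first z) l₁) (W₂ : G.Walk (P.first j) l₂) (i : Fin r) :
    G.Walk (P.first i) (newLast P z j l₁ l₂ i) :=
  if h1 : i = z then W₁.copy (by rw [h1]) (by rw [newLast, if_pos h1])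
  else if h2 : i = j then W₂.copy (by rw [h2]) (by rw [newLast, if_neg h1, if_pos h2])
  else (P.path i).copy rfl (by rw [newLast, if_neg h1, if_neg h2])

lemma newPath_z (P : PathForest G r) (z j : Fin r) {l₁ l₂ : V}
    (W₁ : G.Walk (P.first z) l₁) (W₂ : G.Walk (P.first j) l₂) :
    (newPath P z j W₁ W₂ z).support = W₁.support ∧
    (newPath P z j W₁ W₂ z).edges = W₁.edges := by
  simp [newPath]

lemma newPath_j (P : PathForest G r) (z j : Fin r) {l₁ l₂ : V}
    (W₁ : G.Walk (P.first z) l₁) (W₂ : G.Walk (P.first j) l₂) (hzj : z ≠ j) :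
    (newPath P z j W₁ W₂ j).support = W₂.support ∧
    (newPath P z j W₁ W₂ j).edges = W₂.edges := by
  simp [newPath, hzj.symm]

lemma newPath_other (P : PathForest G r) (z j : Fin r) {l₁ l₂ : V}
    (W₁ : G.Walk (P.first z) l₁) (W₂ : G.Walk (P.first j) l₂)
    (i : Fin r) (hi1 : i ≠ z) (hi2 : i ≠ j) :
    (newPath P z j W₁ W₂ i).support = (P.path i).support ∧
    (newPath P z j W₁ W₂ i).edges = (P.path i).edges := by
  simp [newPath, hi1, hi2]

lemma newPath_support (P : PathForest G r) (z j : Fin r) {l₁ l₂ : V}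
    (W₁ : G.Walk (P.first z) l₁) (W₂ : G.Walk (P.first j) l₂) (hzj : z ≠ j) (i : Fin r) :
    (newPath P z j W₁ W₂ i).support =
      if i = z then W₁.support else if i = j then W₂.support else (P.path i).support := by
  split_ifs with h1 h2
  · rw [h1]; exact (newPath_z P z j W₁ W₂).1
  · rw [h2]; exact (newPath_j P z j W₁ W₂ hzj).1
  · exact (newPath_other P z j W₁ W₂ i h1 h2).1

/-- Build a new forest replacing the paths at indices `z` and `j`. -/
def mkForest (P : PathForest G r) (z j : Fin r) {l₁ l₂ : V}
    (W₁ : G.Walk (P.first z) l₁) (W₂ : G.Walk (P.first j) l₂)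
    (hzj : z ≠ j)
    (h₁ : W₁.IsPath) (h₂ : W₂.IsPath)
    (d12 : ∀ v ∈ W₁.support, v ∉ W₂.support)
    (d1o : ∀ i, i ≠ z → i ≠ j → ∀ v ∈ W₁.support, v ∉ (P.path i).support)
    (d2o : ∀ i, i ≠ z → i ≠ j → ∀ v ∈ W₂.support, v ∉ (P.path i).support) :
    PathForest G r where
  first := P.first
  last := newLast P z j l₁ l₂
  path := newPath P z j W₁ W₂
  isPath i := by
    rw [isPath_def, newPath_support P z j W₁ W₂ hzj i]
    split_ifs with ha hb
    · exact h₁.support_nodup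
    · exact h₂.support_nodup
    · exact (P.isPath i).support_nodup
  disj i k hik v hvi := by
    rw [newPath_support P z j W₁ W₂ hzj i] at hvi
    rw [newPath_support P z j W₁ W₂ hzj k]
    by_cases hi1 : i = z
    · rw [if_pos hi1] at hvi
      by_cases hk1 : k = z
      · exact absurd (hi1.trans hk1.symm) hik
      rw [if_neg hk1]
      by_cases hk2 : k = j
      · rw [if_pos hk2]; exact d12 v hvi
      · rw [if_neg hk2]; exact d1o k hk1 hk2 v hvi
    · rw [if_neg hi1] at hvi
      by_cases hi2 : i = j
      · rw [if_pos hi2] at hvi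
        by_cases hk1 : k = z
        · rw [if_pos hk1]; exact fun hv1 => d12 v hv1 hvi
        rw [if_neg hk1]
        by_cases hk2 : k = j
        · exact absurd (hi2.trans hk2.symm) hik
        · rw [if_neg hk2]; exact d2o k hk1 hk2 v hvi
      · rw [if_neg hi2] at hvi
        by_cases hk1 : k = z
        · rw [if_pos hk1]; exact fun hv1 => d1o i hi1 hi2 v hv1 hvi
        rw [if_neg hk1]
        by_cases hk2 : k = j
        · rw [if_pos hk2]; exact fun hv2 => d2o i hi1 hi2 v hv2 hvi
        · rw [if_neg hk2]; exact P.disj i k hik v hvi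

lemma mkForest_path (P : PathForest G r) (z j : Fin r) {l₁ l₂ : V}
    (W₁ : G.Walk (P.first z) l₁) (W₂ : G.Walk (P.first j) l₂) (hzj h₁ h₂ d12 d1o d2o) :
    ∀ i, ((mkForest P z j W₁ W₂ hzj h₁ h₂ d12 d1o d2o).path i) = newPath P z j W₁ W₂ i :=
  fun _ => rfl

/-- the edges of a path forest, all together, have no duplicates. -/
lemma forest_edges_nodup (P : PathForest G r) :
    (((List.finRange r).flatMap fun i => (P.path i).edges)).Nodup := by
  rw [List.nodup_flatMap]
  constructor
  · exact fun i _ => (P.isPath i).edges_nodup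
  · refine (List.nodup_finRange r).imp ?_
    intro i j hij
    intro e hei hej
    induction e with
    | h x y =>
      exact P.disj i j hij x ((P.path i).fst_mem_support_of_mem_edges hei)
        ((P.path j).fst_mem_support_of_mem_edges hej)


variable {C : Type*}

/-- The key assembly step: extend the walk `W` (a modification of the path at index `z`)
by an edge `s(a,w)` into the path at index `j`, and walk at least `m` further vertices. -/
lemma assemble (c : Sym2 V → C) (P : PathForest G r) (hP : P.IsRainbow c)
    (z j : Fin r) (hzj : j ≠ z)
    {a w : V} (W : G.Walk (P.first z) a) (hWp : W.IsPath)
    (hWlen : (P.path z).support.length ≤ W.support.length)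
    (e₁ : Sym2 V) (hWe : ∀ f ∈ W.edges, f ∈ (P.path z).edges ∨ f = e₁)
    (hWd : ∀ i, i ≠ z → ∀ v ∈ W.support, v ∉ (P.path i).support)
    (hwj : w ∈ (P.path j).support) (hwf : w ≠ P.first j)
    (m : ℕ) (hseg : m ≤ ((P.path j).dropUntil w hwj).support.length)
    (haw : G.Adj a w)
    (hce₁ : ∀ i, ∀ f ∈ (P.path i).edges, c e₁ ≠ c f)
    (hce₂ : ∀ i, ∀ f ∈ (P.path i).edges, c s(a, w) ≠ c f)
    (hee : s(a, w) = e₁ ∨ c s(a, w) ≠ c e₁) :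
    ∃ P' : PathForest G r, P'.IsRainbow c ∧
      (∀ i, ∀ f ∈ (P'.path i).edges, (∃ k, f ∈ (P.path k).edges) ∨ f = e₁ ∨ f = s(a, w)) ∧
      (P.path z).support.length + m ≤ (P'.path z).support.length := by
  classical
  set pj := P.path j with hpj
  set seg := pj.dropUntil w hwj with hsegdef
  set q := pj.takeUntil w hwj with hq
  obtain ⟨y, hadj, t, hq2⟩ := Walk.not_nil_iff.mp (Walk.not_nil_of_ne hwf (p := q.reverse))
  have hqeq : q = (Walk.cons hadj t).reverse := by rw [← hq2, Walk.reverse_reverse]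
  have hqsupp : q.support = t.support.reverse ++ [w] := by
    rw [hqeq, Walk.support_reverse, Walk.support_cons]
    simp
  have hsegcons : seg.support = w :: seg.support.tail := Walk.support_eq_cons _
  have hsupp_j : pj.support = t.support.reverse ++ seg.support := by
    rw [← support_take_drop pj hwj, ← hq, hqsupp, hsegcons]
    simp
  have pjnodup : (t.support.reverse ++ seg.support).Nodup := by
    rw [← hsupp_j]; exact (P.isPath j).support_nodup
  have segpath : seg.IsPath := (P.isPath j).dropUntil hwj
  have hWdj : ∀ v ∈ W.support, v ∉ pj.support := hWd j hzj
  have segsub : ∀ v ∈ seg.support, v ∈ pj.support := fun v hv =>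
    Walk.support_dropUntil_subset pj hwj hv
  have trimsub : ∀ v ∈ t.support.reverse, v ∈ pj.support := by
    intro v hv; rw [hsupp_j]; exact List.mem_append_left _ hv
  -- the two new walks
  set W₁ : G.Walk (P.first z) (P.last j) := W.append (Walk.cons haw seg) with hW₁
  set W₂ : G.Walk (P.first j) y := t.reverse with hW₂
  have hW₁supp : W₁.support = W.support ++ seg.support := by
    rw [hW₁, Walk.support_append, Walk.support_cons]
    simp
  have hW₁edges : W₁.edges = W.edges ++ (s(a, w) :: seg.edges) := by
    rw [hW₁, Walk.edges_append, Walk.edges_cons]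
  have hW₂supp : W₂.support = t.support.reverse := Walk.support_reverse t
  have hW₁path : W₁.IsPath := by
    rw [Walk.isPath_def, hW₁supp]
    exact List.Nodup.append hWp.support_nodup segpath.support_nodup
      (fun v hv hv2 => hWdj v hv (segsub v hv2))
  have hW₂path : W₂.IsPath := by
    rw [Walk.isPath_def, hW₂supp]
    exact pjnodup.of_append_left
  have hW₂edgesub : ∀ f ∈ W₂.edges, f ∈ pj.edges := by
    intro f hf
    apply Walk.edges_takeUntil_subset pj hwj (u := w)
    rw [← hq, hqeq, Walk.edges_reverse, List.mem_reverse, Walk.edges_cons]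
    rw [hW₂, Walk.edges_reverse, List.mem_reverse] at hf
    exact List.mem_cons_of_mem _ hf
  have pjdisj : ∀ v ∈ t.support.reverse, v ∉ seg.support :=
    fun v hv => (List.disjoint_of_nodup_append pjnodup) hv
  have d12 : ∀ v ∈ W₁.support, v ∉ W₂.support := by
    intro v hv
    rw [hW₂supp]
    rw [hW₁supp, List.mem_append] at hv
    rcases hv with hv | hv
    · exact fun hv2 => hWdj v hv (trimsub v hv2)
    · exact fun hv2 => pjdisj v hv2 hv
  have d1o : ∀ i, i ≠ z → i ≠ j → ∀ v ∈ W₁.support, v ∉ (P.path i).support := by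
    intro i hi1 hi2 v hv
    rw [hW₁supp, List.mem_append] at hv
    rcases hv with hv | hv
    · exact hWd i hi1 v hv
    · exact P.disj j i (fun h => hi2 h.symm) v (segsub v hv)
  have d2o : ∀ i, i ≠ z → i ≠ j → ∀ v ∈ W₂.support, v ∉ (P.path i).support := by
    intro i hi1 hi2 v hv
    rw [hW₂supp] at hv
    exact P.disj j i (fun h => hi2 h.symm) v (trimsub v hv)
  set P' := mkForest P z j W₁ W₂ (fun h => hzj h.symm) hW₁path hW₂path d12 d1o d2o with hP'
  have hpz : (P'.path z).edges = W₁.edges := (newPath_z P z j W₁ W₂).2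
  have hpzs : (P'.path z).support = W₁.support := (newPath_z P z j W₁ W₂).1
  have hpj2 : (P'.path j).edges = W₂.edges := (newPath_j P z j W₁ W₂ (fun h => hzj h.symm)).2
  have hpoth : ∀ i, i ≠ z → i ≠ j → (P'.path i).edges = (P.path i).edges :=
    fun i h1 h2 => (newPath_other P z j W₁ W₂ i h1 h2).2
  -- containment
  have contain : ∀ i, ∀ f ∈ (P'.path i).edges,
      (∃ k, f ∈ (P.path k).edges) ∨ f = e₁ ∨ f = s(a, w) := by
    intro i f hf
    by_cases hi1 : i = z
    · rw [hi1, hpz, hW₁edges] at hf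
      rcases List.mem_append.mp hf with hf | hf
      · rcases hWe f hf with hf | hf
        · exact Or.inl ⟨z, hf⟩
        · exact Or.inr (Or.inl hf)
      · rcases List.mem_cons.mp hf with hf | hf
        · exact Or.inr (Or.inr hf)
        · exact Or.inl ⟨j, Walk.edges_dropUntil_subset pj hwj hf⟩
    · by_cases hi2 : i = j
      · rw [hi2, hpj2] at hf
        exact Or.inl ⟨j, hW₂edgesub f hf⟩
      · rw [hpoth i hi1 hi2] at hf
        exact Or.inl ⟨i, hf⟩
  refine ⟨P', ?_, contain, ?_⟩
  · -- rainbow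
    have nodupNew := forest_edges_nodup P'
    set oldFlat := (List.finRange r).flatMap (fun i => (P.path i).edges) with hof
    have oldmem : ∀ f ∈ oldFlat, ∃ k, f ∈ (P.path k).edges := by
      intro f hf
      rcases List.mem_flatMap.mp hf with ⟨k, _, hk⟩
      exact ⟨k, hk⟩
    have memold : ∀ k, ∀ f ∈ (P.path k).edges, f ∈ oldFlat := by
      intro k f hf
      exact List.mem_flatMap.mpr ⟨k, List.mem_finRange k, hf⟩
    have subsetNew : ∀ f ∈ (List.finRange r).flatMap (fun i => (P'.path i).edges),
        f ∈ e₁ :: s(a, w) :: oldFlat := by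
      intro f hf
      rcases List.mem_flatMap.mp hf with ⟨i, _, hi⟩
      rcases contain i f hi with ⟨k, hk⟩ | hf | hf
      · exact List.mem_cons_of_mem _ (List.mem_cons_of_mem _ (memold k f hk))
      · rw [hf]; exact List.mem_cons_self
      · exact List.mem_cons_of_mem _ (List.mem_cons.mpr (Or.inl hf))
    have hPn : (oldFlat.map c).Nodup := hP
    show (((List.finRange r).flatMap fun i => (P'.path i).edges).map c).Nodup
    have notmem1 : c e₁ ∉ oldFlat.map c := by
      intro hmem
      rcases List.mem_map.mp hmem with ⟨f, hf, hcf⟩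
      rcases oldmem f hf with ⟨k, hk⟩
      exact hce₁ k f hk hcf.symm
    have notmem2 : c s(a, w) ∉ oldFlat.map c := by
      intro hmem
      rcases List.mem_map.mp hmem with ⟨f, hf, hcf⟩
      rcases oldmem f hf with ⟨k, hk⟩
      exact hce₂ k f hk hcf.symm
    rcases hee with heq | hne
    · have subset' : ∀ f ∈ (List.finRange r).flatMap (fun i => (P'.path i).edges),
          f ∈ e₁ :: oldFlat := by
        intro f hf
        rcases List.mem_cons.mp (subsetNew f hf) with h | h
        · exact List.mem_cons.mpr (Or.inl h)
        rcases List.mem_cons.mp h with h | h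
        · exact List.mem_cons.mpr (Or.inl (h.trans heq))
        · exact List.mem_cons_of_mem _ h
      obtain ⟨l, hl1, hl2⟩ := List.subperm_of_subset nodupNew subset'
      have tnodup : ((e₁ :: oldFlat).map c).Nodup := by
        rw [List.map_cons]
        exact List.nodup_cons.mpr ⟨notmem1, hPn⟩
      exact (hl1.map c).nodup (List.Nodup.sublist (hl2.map c) tnodup)
    · obtain ⟨l, hl1, hl2⟩ := List.subperm_of_subset nodupNew subsetNew
      have tnodup : ((e₁ :: s(a, w) :: oldFlat).map c).Nodup := by
        rw [List.map_cons, List.map_cons]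
        refine List.nodup_cons.mpr ⟨?_, List.nodup_cons.mpr ⟨notmem2, hPn⟩⟩
        intro hmem
        rcases List.mem_cons.mp hmem with h | h
        · exact hne h.symm
        · exact notmem1 h
      exact (hl1.map c).nodup (List.Nodup.sublist (hl2.map c) tnodup)
  · rw [hpzs, hW₁supp, List.length_append]
    have := hWlen
    omega

lemma support_getD_last {v w : V} (p : G.Walk v w) (d : V) :
    p.support.getD (p.support.length - 1) d = w := by
  induction p with
  | nil => rfl
  | cons h q ih =>
    rw [Walk.support_cons]
    have h1 : q.support.length = q.length + 1 := q.length_support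
    have h2 : (q.support.length + 1) - 1 = (q.support.length - 1) + 1 := by omega
    rw [List.length_cons, h2, List.getD_cons_succ]
    exact ih

lemma indexOf_add_one_lt {u v w : V} (p : G.Walk v w) (h : u ∈ p.support) (hne : u ≠ w) :
    p.support.idxOf u + 1 < p.support.length := by
  have hlt : p.support.idxOf u < p.support.length := List.idxOf_lt_length_iff.mpr h
  rcases Nat.lt_or_ge (p.support.idxOf u + 1) p.support.length with h1 | h1
  · exact h1
  · exfalso
    have hidx : p.support.idxOf u = p.support.length - 1 := by omega
    have hu : p.support.getD (p.support.idxOf u) w = u := by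
      rw [List.getD_eq_getElem _ _ hlt]
      exact List.getElem_idxOf hlt
    rw [hidx, support_getD_last] at hu
    exact hne hu.symm

/-- Rotation: replace the final segment of a path by the edge `xu`. -/
lemma rotate_walk {v x u : V} (p : G.Walk v x) (hp : p.IsPath) (hu : u ∈ p.support)
    (hux : u ≠ x) (hxu : G.Adj x u) :
    ∃ W : G.Walk v (p.support.getD (p.support.idxOf u + 1) x),
      W.IsPath ∧ W.support.Perm p.support ∧
      (∀ f ∈ W.edges, f ∈ p.edges ∨ f = s(x, u)) := by
  classical
  set q := p.takeUntil u hu with hq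
  set d := p.dropUntil u hu with hd
  obtain ⟨y, hadjd, t, hdeq⟩ := Walk.not_nil_iff.mp (Walk.not_nil_of_ne hux (p := d))
  have hsupp : p.support = q.support ++ t.support := by
    rw [← support_take_drop p hu, ← hq, ← hd, hdeq]
    simp
  have hqlen : q.support.length = p.support.idxOf u + 1 :=
    support_length_takeUntil_eq p hu
  have hyeq : p.support.getD (p.support.idxOf u + 1) x = y := by
    have hk : p.support.idxOf u + 1 = q.support.length := hqlen.symm
    rw [hk, hsupp, List.getD_append_right _ _ _ _ (le_refl _), Nat.sub_self]
    have ht : t.support = y :: t.support.tail := Walk.support_eq_cons _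
    rw [ht, List.getD_cons_zero]
  set W0 : G.Walk v y := q.append (Walk.cons hxu.symm t.reverse) with hW0
  have hW0supp : W0.support = q.support ++ t.support.reverse := by
    rw [hW0, Walk.support_append, Walk.support_cons]
    simp [Walk.support_reverse]
  have hperm : W0.support.Perm p.support := by
    rw [hW0supp, hsupp]
    exact List.Perm.append_left q.support (List.reverse_perm t.support)
  have hW0path : W0.IsPath := by
    rw [Walk.isPath_def]
    exact hperm.symm.nodup hp.support_nodup
  have hW0edges : ∀ f ∈ W0.edges, f ∈ p.edges ∨ f = s(x, u) := by
    intro f hf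
    rw [hW0, Walk.edges_append, Walk.edges_cons] at hf
    rcases List.mem_append.mp hf with hf | hf
    · exact Or.inl (Walk.edges_takeUntil_subset p hu hf)
    rcases List.mem_cons.mp hf with hf | hf
    · right; rw [hf, Sym2.eq_swap]
    · left
      apply Walk.edges_dropUntil_subset p hu
      rw [← hd, hdeq, Walk.edges_cons]
      rw [Walk.edges_reverse, List.mem_reverse] at hf
      exact List.mem_cons_of_mem _ hf
  refine ⟨W0.copy rfl hyeq.symm, ?_, ?_, ?_⟩
  · simpa using hW0path
  · simpa using hperm
  · simpa using hW0edges

/-- The set of good entry points on path `j` : not the first vertex, and at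
least `m` vertices of the path from there on. -/
def goodF (P : PathForest G r) (m : ℕ) (j : Fin r) : Finset V :=
  (Finset.Icc 1 ((P.path j).support.length - m)).image
    (fun p => (P.path j).support.getD p (P.first j))

lemma goodF_mem {P : PathForest G r} {m : ℕ} {j : Fin r} {w : V} (hm : 0 < m)
    (hw : w ∈ goodF P m j) :
    ∃ h : w ∈ (P.path j).support, w ≠ P.first j ∧
      m ≤ ((P.path j).dropUntil w h).support.length := by
  classical
  set L := (P.path j).support.length with hL
  obtain ⟨p, hp, hwp⟩ := Finset.mem_image.mp hw
  rw [Finset.mem_Icc] at hp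
  have hL1 : 1 ≤ L - m := le_trans hp.1 hp.2
  have hpL : p < L := by omega
  have hgd : (P.path j).support.getD p (P.first j) = (P.path j).support[p] :=
    List.getD_eq_getElem _ _ hpL
  have hwelem : (P.path j).support[p] = w := by rw [← hwp, hgd]
  have hmem : w ∈ (P.path j).support :=
    List.mem_iff_getElem.mpr ⟨p, hpL, hwelem⟩
  have hidx : (P.path j).support.idxOf w = p := by
    rw [← hwelem]
    exact List.Nodup.idxOf_getElem (P.isPath j).support_nodup p hpL
  refine ⟨hmem, ?_, ?_⟩
  · intro hfirst
    have : (P.path j).support.idxOf w = 0 := by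
      rw [hfirst, Walk.support_eq_cons (P.path j)]
      exact List.idxOf_cons_self
    omega
  · rw [support_length_dropUntil_eq _ hmem, hidx, ← hL]
    omega

lemma goodF_subset {P : PathForest G r} {m : ℕ} {j : Fin r} {w : V}
    (hw : w ∈ goodF P m j) (hm : 0 < m) : w ∈ (P.path j).support := by
  obtain ⟨h, -, -⟩ := goodF_mem hm hw
  exact h

lemma goodF_card {P : PathForest G r} {m : ℕ} {j : Fin r} (hm : 0 < m) :
    (P.path j).support.length - m ≤ (goodF P m j).card := by
  classical
  set L := (P.path j).support.length with hL
  have hinj : Set.InjOn (fun p => (P.path j).support.getD p (P.first j))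
      (Finset.Icc 1 (L - m)) := by
    intro p hp p' hp' heq
    rw [Finset.coe_Icc, Set.mem_Icc] at hp hp'
    have hpL : p < L := by omega
    have hpL' : p' < L := by omega
    simp only [List.getD_eq_getElem _ _ hpL, List.getD_eq_getElem _ _ hpL'] at heq
    have h1 := List.Nodup.idxOf_getElem (P.isPath j).support_nodup p hpL
    have h2 := List.Nodup.idxOf_getElem (P.isPath j).support_nodup p' hpL'
    rw [← h1, ← h2, heq]
  rw [goodF, Finset.card_image_of_injOn hinj, Nat.card_Icc]
  omega

lemma pick_pair (c : Sym2 V → C) (hc : IsProperEdgeColoring G c)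
    (H : SimpleGraph V) [DecidableRel H.Adj] (hHG : H ≤ G)
    {b : ℕ} (A B : Finset V) (hexp : b + 1 ≤ (H.interedges A B).card)
    (hA : A.card = b) (eF : V → Sym2 V) :
    ∃ a ∈ A, ∃ w ∈ B, H.Adj a w ∧ c s(a, w) ≠ c (eF a) := by
  classical
  set bad := (H.interedges A B).filter (fun pr => c s(pr.1, pr.2) = c (eF pr.1)) with hbad
  have hbadcard : bad.card ≤ b := by
    rw [← hA]
    apply Finset.card_le_card_of_injOn Prod.fst
    · intro pr hpr
      simp only [Finset.mem_coe, hbad, Finset.mem_filter] at hpr ⊢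
      exact ((SimpleGraph.mem_interedges_iff H).mp hpr.1).1
    · intro pr hpr qr hqr heq
      simp only [hbad, Finset.coe_filter, Set.mem_setOf_eq] at hpr hqr
      obtain ⟨hpr1, hpr2⟩ := hpr
      obtain ⟨hqr1, hqr2⟩ := hqr
      rw [SimpleGraph.mem_interedges_iff H] at hpr1 hqr1
      have hadj1 : G.Adj pr.1 pr.2 := hHG hpr1.2.2
      have hadj2 : G.Adj qr.1 qr.2 := hHG hqr1.2.2
      have hedge : s(pr.1, pr.2) = s(qr.1, qr.2) := by
        by_contra hne
        refine hc _ (G.mem_edgeSet.mpr hadj1) _ (G.mem_edgeSet.mpr hadj2) hne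
          ⟨pr.1, Sym2.mem_mk_left _ _, ?_⟩ ?_
        · rw [← heq]; exact Sym2.mem_mk_left _ _
        · rw [hpr2, hqr2, heq]
      rw [heq] at hedge
      have : pr.2 = qr.2 := Sym2.congr_right.mp hedge
      exact Prod.ext heq this
  have hlt : bad.card < (H.interedges A B).card := by omega
  have : ∃ pr ∈ H.interedges A B, pr ∉ bad := by
    by_contra hco
    push_neg at hco
    exact absurd (Finset.card_le_card hco) (by omega)
  obtain ⟨pr, hpr, hprbad⟩ := this
  rw [SimpleGraph.mem_interedges_iff H] at hpr
  refine ⟨pr.1, hpr.1, pr.2, hpr.2.1, hpr.2.2, ?_⟩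
  intro hcc
  exact hprbad (Finset.mem_filter.mpr ⟨(SimpleGraph.mem_interedges_iff H).mpr hpr, hcc⟩)

end StmtAux

open StmtAux SimpleGraph Walk

/-- Rotation lemma: given a rainbow path forest `P₁,…,P_r` and an expander `H`
colour-disjoint from the forest, either `P₁` already covers almost all of the
forest's vertices, or one can enlarge `P₁` by `m` vertices using two edges of `H`. -/
theorem stmt3 {V : Type*} [Fintype V] [DecidableEq V]
    (G : SimpleGraph V) (C : Type*) (c : Sym2 V → C)
    (hc : IsProperEdgeColoring G c)
    (b m r : ℕ) (hb : 0 < b) (hm : 0 < m) (hr : 0 < r) (hmrb : 2 * m * r ≤ b)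
    (P : PathForest G r) (hP : P.IsRainbow c)
    (H : SimpleGraph V) [DecidableRel H.Adj] (hHG : H ≤ G)
    (hcol : ∀ e ∈ H.edgeSet, ∀ i, ∀ f ∈ (P.path i).edges, c e ≠ c f)
    (hdeg : ∀ v, 3 * b ≤ H.degree v)
    (hexp : ∀ A B : Finset V, Disjoint A B → A.card = b → B.card = b →
      b + 1 ≤ (H.interedges A B).card) :
    ((P.vertexCount : ℤ) - 2 * b ≤ ((P.path ⟨0, hr⟩).support.length : ℤ)) ∨
    ∃ e₁ ∈ H.edgeSet, ∃ e₂ ∈ H.edgeSet, ∃ P' : PathForest G r,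
      P'.IsRainbow c ∧
      (∀ i, ∀ f ∈ (P'.path i).edges, (∃ j, f ∈ (P.path j).edges) ∨ f = e₁ ∨ f = e₂) ∧
      (P.path ⟨0, hr⟩).support.length + m ≤ (P'.path ⟨0, hr⟩).support.length := by
  classical
  by_cases hleft : ((P.vertexCount : ℤ) - 2 * b ≤ ((P.path ⟨0, hr⟩).support.length : ℤ))
  · exact Or.inl hleft
  right
  push_neg at hleft
  set z : Fin r := ⟨0, hr⟩ with hzdef
  have hsum0 : (P.path z).support.length + ∑ i ∈ Finset.univ.erase z, (P.path i).support.length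
      = P.vertexCount := by
    unfold PathForest.vertexCount
    exact Finset.add_sum_erase Finset.univ (fun i => (P.path i).support.length)
      (Finset.mem_univ z)
  have hvc : (P.path z).support.length + 2 * b + 1 ≤ P.vertexCount := by
    have h1 : ((P.path z).support.length : ℤ) < (P.vertexCount : ℤ) - 2 * b := hleft
    omega
  have hsum : 2 * b + 1 ≤ ∑ i ∈ Finset.univ.erase z, (P.path i).support.length := by omega
  have hmrb' : m * (r - 1) ≤ b := by
    have h1 : m * (r - 1) ≤ m * r := Nat.mul_le_mul_left _ (Nat.sub_le _ _)
    have h2 : 2 * (m * r) ≤ b := by rw [← mul_assoc]; exact hmrb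
    omega
  have hcarderase : (Finset.univ.erase z).card = r - 1 := by
    rw [Finset.card_erase_of_mem (Finset.mem_univ z), Finset.card_univ, Fintype.card_fin]
  set Gd := (Finset.univ.erase z).biUnion (fun j => goodF P m j) with hGd
  have hGdsub : ∀ w ∈ Gd, ∃ j, j ≠ z ∧ w ∈ goodF P m j := by
    intro w hw
    obtain ⟨j, hj, hwj⟩ := Finset.mem_biUnion.mp hw
    exact ⟨j, (Finset.mem_erase.mp hj).1, hwj⟩
  have hGdcard : b + 1 ≤ Gd.card := by
    have hdisj : ∀ i ∈ Finset.univ.erase z, ∀ j ∈ Finset.univ.erase z, i ≠ j →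
        Disjoint (goodF P m i) (goodF P m j) := by
      intro i _ j _ hij
      rw [Finset.disjoint_left]
      intro w hwi hwj
      exact P.disj i j hij w (goodF_subset hwi hm) (goodF_subset hwj hm)
    rw [hGd, Finset.card_biUnion hdisj]
    have h1 : ∀ j ∈ Finset.univ.erase z, (P.path j).support.length - m ≤ (goodF P m j).card :=
      fun j _ => goodF_card hm
    have h2 := Finset.sum_le_sum h1
    have h3 : ∀ j ∈ Finset.univ.erase z,
        (P.path j).support.length ≤ ((P.path j).support.length - m) + m :=
      fun j _ => by omega
    have h4 := Finset.sum_le_sum h3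
    rw [Finset.sum_add_distrib, Finset.sum_const, hcarderase, smul_eq_mul] at h4
    have h5 : (r - 1) * m = m * (r - 1) := Nat.mul_comm _ _
    omega
  set x := P.last z with hxdef
  set Nx := H.neighborFinset x with hNxdef
  have hNxcard : 3 * b ≤ Nx.card := by
    rw [hNxdef, SimpleGraph.card_neighborFinset_eq_degree]
    exact hdeg x
  have hNxadj : ∀ u ∈ Nx, H.Adj x u := by
    intro u hu
    rw [hNxdef, SimpleGraph.mem_neighborFinset] at hu
    exact hu
  by_cases hdirect : ∃ w ∈ Nx, w ∈ Gd
  · obtain ⟨w, hwNx, hwGd⟩ := hdirect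
    obtain ⟨j, hjz, hwj⟩ := hGdsub w hwGd
    obtain ⟨hwmem, hwf, hwseg⟩ := goodF_mem hm hwj
    have hxw : H.Adj x w := hNxadj w hwNx
    have hxwE : s(x, w) ∈ H.edgeSet := H.mem_edgeSet.mpr hxw
    obtain ⟨P', hrain, hcont, hlen⟩ :=
      assemble c P hP z j hjz (P.path z) (P.isPath z) (le_refl _) s(x, w)
        (fun f hf => Or.inl hf)
        (fun i hi v hv => P.disj z i (fun h => hi h.symm) v hv)
        hwmem hwf m hwseg (hHG hxw)
        (fun i f hf => hcol _ hxwE i f hf)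
        (fun i f hf => hcol _ hxwE i f hf)
        (Or.inl rfl)
    exact ⟨s(x, w), hxwE, s(x, w), hxwE, P', hrain, hcont, hlen⟩
  · push_neg at hdirect
    set allSupp := Finset.univ.biUnion (fun i : Fin r => (P.path i).support.toFinset) with hallS
    set N₁ := Nx ∩ (P.path z).support.toFinset with hN₁
    set O := Nx \ allSupp with hOdef
    have hbadc : ∀ j : Fin r, ((P.path j).support.toFinset \ goodF P m j).card ≤ m := by
      intro j
      have hsub : goodF P m j ⊆ (P.path j).support.toFinset := by
        intro w hw
        exact List.mem_toFinset.mpr (goodF_subset hw hm)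
      rw [Finset.card_sdiff_of_subset hsub, List.toFinset_card_of_nodup (P.isPath j).support_nodup]
      have := goodF_card (P := P) (j := j) hm
      omega
    have hcover : Nx ⊆ N₁ ∪ O ∪ (Finset.univ.erase z).biUnion
        (fun j => (P.path j).support.toFinset \ goodF P m j) := by
      intro v hv
      by_cases h1 : v ∈ (P.path z).support.toFinset
      · exact Finset.mem_union_left _ (Finset.mem_union_left _ (Finset.mem_inter.mpr ⟨hv, h1⟩))
      by_cases h2 : v ∈ allSupp
      · obtain ⟨i, -, hvi⟩ := Finset.mem_biUnion.mp h2
        have hiz : i ≠ z := by rintro rfl; exact h1 hvi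
        have hvgood : v ∉ goodF P m i := by
          intro hvg
          exact hdirect v hv (Finset.mem_biUnion.mpr
            ⟨i, Finset.mem_erase.mpr ⟨hiz, Finset.mem_univ i⟩, hvg⟩)
        exact Finset.mem_union_right _ (Finset.mem_biUnion.mpr
          ⟨i, Finset.mem_erase.mpr ⟨hiz, Finset.mem_univ i⟩, Finset.mem_sdiff.mpr ⟨hvi, hvgood⟩⟩)
      · exact Finset.mem_union_left _ (Finset.mem_union_right _ (Finset.mem_sdiff.mpr ⟨hv, h2⟩))
    have hNObound : 2 * b ≤ N₁.card + O.card := by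
      have h1 := Finset.card_le_card hcover
      have h2 := Finset.card_union_le (N₁ ∪ O)
        ((Finset.univ.erase z).biUnion (fun j => (P.path j).support.toFinset \ goodF P m j))
      have h3 := Finset.card_union_le N₁ O
      have h4 := Finset.card_biUnion_le (s := Finset.univ.erase z)
        (t := fun j => (P.path j).support.toFinset \ goodF P m j)
      have h5 : ∑ j ∈ Finset.univ.erase z, ((P.path j).support.toFinset \ goodF P m j).card
          ≤ ∑ _j ∈ Finset.univ.erase z, m := Finset.sum_le_sum (fun j _ => hbadc j)
      rw [Finset.sum_const, hcarderase, smul_eq_mul] at h5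
      have h6 : (r - 1) * m = m * (r - 1) := Nat.mul_comm _ _
      omega
    obtain ⟨B', hB'sub, hB'card⟩ := Finset.exists_subset_card_eq
      (show b ≤ Gd.card by omega)
    have hB'allS : ∀ w ∈ B', ∃ j, j ≠ z ∧ w ∈ goodF P m j := fun w hw => hGdsub w (hB'sub hw)
    have hsplit : b ≤ O.card ∨ b ≤ N₁.card := by omega
    rcases hsplit with hOc | hNc
    · -- extend by a vertex outside the forest
      obtain ⟨A', hA'sub, hA'card⟩ := Finset.exists_subset_card_eq hOc
      have hdisjAB : Disjoint A' B' := by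
        rw [Finset.disjoint_left]
        intro v hvA hvB
        have hvO := hA'sub hvA
        rw [hOdef, Finset.mem_sdiff] at hvO
        obtain ⟨j, hjz, hvg⟩ := hB'allS v hvB
        exact hvO.2 (Finset.mem_biUnion.mpr ⟨j, Finset.mem_univ j,
          List.mem_toFinset.mpr (goodF_subset hvg hm)⟩)
      obtain ⟨a, haA, w, hwB, hawH, hcne⟩ :=
        pick_pair c hc H hHG A' B' (hexp A' B' hdisjAB hA'card hB'card) hA'card
          (fun a => s(x, a))
      have haO := hA'sub haA
      rw [hOdef, Finset.mem_sdiff] at haO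
      have hxa : H.Adj x a := hNxadj a haO.1
      have hanS : ∀ i, a ∉ (P.path i).support := by
        intro i hai
        exact haO.2 (Finset.mem_biUnion.mpr ⟨i, Finset.mem_univ i, List.mem_toFinset.mpr hai⟩)
      obtain ⟨j, hjz, hwj⟩ := hB'allS w hwB
      obtain ⟨hwmem, hwf, hwseg⟩ := goodF_mem hm hwj
      set W : G.Walk (P.first z) a := (P.path z).concat (hHG hxa) with hW
      have hWsupp : W.support = (P.path z).support ++ [a] := by
        rw [hW, Walk.support_concat]
      have hWpath : W.IsPath := by
        rw [Walk.isPath_def, hWsupp]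
        refine List.Nodup.append (P.isPath z).support_nodup (List.nodup_singleton a) ?_
        intro v hv hv2
        rw [List.mem_singleton] at hv2
        subst hv2
        exact hanS z hv
      have hWlen : (P.path z).support.length ≤ W.support.length := by
        rw [hWsupp]; simp
      have hWe : ∀ f ∈ W.edges, f ∈ (P.path z).edges ∨ f = s(x, a) := by
        intro f hf
        rw [hW, Walk.edges_concat, List.concat_eq_append] at hf
        rcases List.mem_append.mp hf with hf | hf
        · exact Or.inl hf
        · exact Or.inr (List.mem_singleton.mp hf)
      have hWd : ∀ i, i ≠ z → ∀ v ∈ W.support, v ∉ (P.path i).support := by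
        intro i hi v hv
        rw [hWsupp, List.mem_append] at hv
        rcases hv with hv | hv
        · exact P.disj z i (fun h => hi h.symm) v hv
        · rw [List.mem_singleton] at hv; subst hv; exact hanS i
      have hxaE : s(x, a) ∈ H.edgeSet := H.mem_edgeSet.mpr hxa
      have hawE : s(a, w) ∈ H.edgeSet := H.mem_edgeSet.mpr hawH
      obtain ⟨P', hrain, hcont, hlen⟩ :=
        assemble c P hP z j hjz W hWpath hWlen s(x, a) hWe hWd hwmem hwf m hwseg (hHG hawH)
          (fun i f hf => hcol _ hxaE i f hf) (fun i f hf => hcol _ hawE i f hf) (Or.inr hcne)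
      exact ⟨s(x, a), hxaE, s(a, w), hawE, P', hrain, hcont, hlen⟩
    · -- rotation case
      have hN₁mem : ∀ u ∈ N₁, u ∈ (P.path z).support ∧ H.Adj x u ∧ u ≠ x := by
        intro u hu
        rw [hN₁, Finset.mem_inter] at hu
        have hadj : H.Adj x u := hNxadj u hu.1
        exact ⟨List.mem_toFinset.mp hu.2, hadj, hadj.ne'⟩
      have hidxlt : ∀ u ∈ N₁, (P.path z).support.idxOf u + 1 < (P.path z).support.length := by
        intro u hu
        obtain ⟨h1, h2, h3⟩ := hN₁mem u hu
        exact indexOf_add_one_lt (P.path z) h1 h3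
      set nx : V → V :=
        fun u => (P.path z).support.getD ((P.path z).support.idxOf u + 1) x with hnx
      have hnxmem : ∀ u ∈ N₁, nx u ∈ (P.path z).support := by
        intro u hu
        rw [hnx]
        simp only
        rw [List.getD_eq_getElem _ _ (hidxlt u hu)]
        exact List.getElem_mem _
      have hnxidx : ∀ u ∈ N₁,
          (P.path z).support.idxOf (nx u) = (P.path z).support.idxOf u + 1 := by
        intro u hu
        rw [hnx]
        simp only
        rw [List.getD_eq_getElem _ _ (hidxlt u hu)]
        exact List.Nodup.idxOf_getElem (P.isPath z).support_nodup _ _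
      have hnxinj : Set.InjOn nx N₁ := by
        intro u hu u' hu' heq
        have h1 := hnxidx u hu
        have h2 := hnxidx u' hu'
        rw [heq] at h1
        have hidq : (P.path z).support.idxOf u = (P.path z).support.idxOf u' := by omega
        have hu1 := (hN₁mem u hu).1
        have hu2 := (hN₁mem u' hu').1
        have e1 : (P.path z).support.getD ((P.path z).support.idxOf u) x = u := by
          rw [List.getD_eq_getElem _ _ (List.idxOf_lt_length_iff.mpr hu1)]
          exact List.getElem_idxOf _
        have e2 : (P.path z).support.getD ((P.path z).support.idxOf u') x = u' := by
          rw [List.getD_eq_getElem _ _ (List.idxOf_lt_length_iff.mpr hu2)]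
          exact List.getElem_idxOf _
        rw [← e1, ← e2, hidq]
      set A₀ := N₁.image nx with hA₀
      have hA₀card : b ≤ A₀.card := by
        rw [hA₀, Finset.card_image_of_injOn hnxinj]
        exact hNc
      obtain ⟨A', hA'sub, hA'card⟩ := Finset.exists_subset_card_eq hA₀card
      have hA'supp : ∀ a ∈ A', a ∈ (P.path z).support := by
        intro a ha
        obtain ⟨u, hu, hua⟩ := Finset.mem_image.mp (hA'sub ha)
        rw [← hua]
        exact hnxmem u hu
      have hdisjAB : Disjoint A' B' := by
        rw [Finset.disjoint_left]
        intro v hvA hvB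
        obtain ⟨j, hjz, hvg⟩ := hB'allS v hvB
        exact P.disj z j (fun h => hjz h.symm) v (hA'supp v hvA) (goodF_subset hvg hm)
      set pv : V → V :=
        fun a => (P.path z).support.getD ((P.path z).support.idxOf a - 1) x with hpv
      have hpvnx : ∀ u ∈ N₁, pv (nx u) = u := by
        intro u hu
        rw [hpv]
        simp only
        rw [hnxidx u hu]
        simp only [Nat.add_sub_cancel]
        rw [List.getD_eq_getElem _ _ (List.idxOf_lt_length_iff.mpr (hN₁mem u hu).1)]
        exact List.getElem_idxOf _
      obtain ⟨a, haA, w, hwB, hawH, hcne⟩ :=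
        pick_pair c hc H hHG A' B' (hexp A' B' hdisjAB hA'card hB'card) hA'card
          (fun a => s(x, pv a))
      obtain ⟨u, huN₁, hua⟩ := Finset.mem_image.mp (hA'sub haA)
      obtain ⟨humem, huadj, hune⟩ := hN₁mem u huN₁
      obtain ⟨W0, hW0path, hW0perm, hW0edges⟩ :=
        rotate_walk (P.path z) (P.isPath z) humem hune (hHG huadj)
      have hends : (P.path z).support.getD ((P.path z).support.idxOf u + 1) x = a := hua
      set W : G.Walk (P.first z) a := W0.copy rfl hends with hWdef
      have hWsupp : W.support = W0.support := Walk.support_copy _ _ _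
      have hWedges : W.edges = W0.edges := Walk.edges_copy _ _ _
      have hWpath : W.IsPath := by rw [hWdef, Walk.isPath_copy]; exact hW0path
      have hWlen : (P.path z).support.length ≤ W.support.length := by
        rw [hWsupp, hW0perm.length_eq]
      have hWe : ∀ f ∈ W.edges, f ∈ (P.path z).edges ∨ f = s(x, u) := by
        rw [hWedges]; exact hW0edges
      have hWd : ∀ i, i ≠ z → ∀ v ∈ W.support, v ∉ (P.path i).support := by
        intro i hi v hv
        rw [hWsupp] at hv
        exact P.disj z i (fun h => hi h.symm) v (hW0perm.mem_iff.mp hv)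
      have hxuE : s(x, u) ∈ H.edgeSet := H.mem_edgeSet.mpr huadj
      have hawE : s(a, w) ∈ H.edgeSet := H.mem_edgeSet.mpr hawH
      have hpva : pv a = u := by rw [← hua]; exact hpvnx u huN₁
      have hcne' : c s(a, w) ≠ c s(x, u) := by
        rw [← hpva]
        exact hcne
      obtain ⟨j, hjz, hwj⟩ := hB'allS w hwB
      obtain ⟨hwmem, hwf, hwseg⟩ := goodF_mem hm hwj
      obtain ⟨P', hrain, hcont, hlen⟩ :=
        assemble c P hP z j hjz W hWpath hWlen s(x, u) hWe hWd hwmem hwf m hwseg (hHG hawH)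
          (fun i f hf => hcol _ hxuE i f hf) (fun i f hf => hcol _ hawE i f hf) (Or.inr hcne')
      exact ⟨s(x, u), hxuE, s(a, w), hawE, P', hrain, hcont, hlen⟩
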